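/- For grooming factor C = 4, any valid solution satisfies A(4,N) ≥ (7/32)N(N−1) + (3/160)(N−1). -/

import Mathlib

/-- The load induced on the arc of the directed cycle `C⃗_p` going from `t` to `t+1`
by a set `S` of requests, each request `(i,j)` being routed clockwise from `i` to `j`. -/
def cload (p : ℕ) (S : Finset (ZMod p × ZMod p)) (t : ZMod p) : ℕ :=
  (S.filter fun a => (t - a.1).val < (a.2 - a.1).val).card

/-- The set of vertices (endpoints of arcs) of a digraph given by its arc set. -/
def verts (p : ℕ) (S : Finset (ZMod p × ZMod p)) : Finset (ZMod p) :=
  S.image Prod.fst ∪ S.image Prod.snd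

set_option linter.unusedSectionVars false
set_option maxHeartbeats 1000000

def cov {N : ℕ} (a : ZMod N × ZMod N) (v : ZMod N) : Prop :=
  (v - a.1).val < (a.2 - a.1).val

instance covDec {N : ℕ} (a : ZMod N × ZMod N) (v : ZMod N) : Decidable (cov a v) := by
  unfold cov; infer_instance


section helpers
variable {N : ℕ} [NeZero N]


lemma zval_inj {x y : ZMod N} (h : x.val = y.val) : x = y := ZMod.val_injective N h

lemma zval_pos {x y : ZMod N} (h : x ≠ y) : 0 < (x - y).val := by
  rw [ZMod.val_pos]; exact sub_ne_zero_of_ne h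

lemma zval_neg {x y : ZMod N} (h : x ≠ y) : (x - y).val = N - (y - x).val := by
  haveI : NeZero (y - x) := ⟨sub_ne_zero_of_ne h.symm⟩
  have h2 := ZMod.val_neg_of_ne_zero (y - x)
  rw [neg_sub] at h2
  exact h2

lemma zval_add_cases (x y : ZMod N) :
    (x + y).val = x.val + y.val ∨ (x + y).val + N = x.val + y.val := by
  have hx := ZMod.val_lt x
  have hy := ZMod.val_lt y
  rw [ZMod.val_add]
  rcases Nat.lt_or_ge (x.val + y.val) N with h | h
  · left; exact Nat.mod_eq_of_lt h
  · right
    rw [Nat.mod_eq_sub_mod h, Nat.mod_eq_of_lt (by omega)]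
    omega

lemma zval_triangle (x y z : ZMod N) :
    (x - z).val = (x - y).val + (y - z).val ∨
    (x - z).val + N = (x - y).val + (y - z).val := by
  have h := zval_add_cases (x - y) (y - z)
  rw [sub_add_sub_cancel] at h
  exact h

/-- The meeting lemma: if `a2 ∈ [b1,b2)`, `b2 ∈ [a1,a2)`, `b1 ∉ [a1,a2)`, then `b1 = a2`. -/
lemma meet {a1 a2 b1 b2 : ZMod N} (ha : a1 ≠ a2)
    (h1 : (a2 - b1).val < (b2 - b1).val)
    (h2 : (b2 - a1).val < (a2 - a1).val)
    (h3 : ¬ (b1 - a1).val < (a2 - a1).val) : b1 = a2 := by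
  push_neg at h3
  rcases Nat.eq_or_lt_of_le h3 with heq | hlt
  · have : b1 - a1 = a2 - a1 := zval_inj heq.symm
    have := congrArg (· + a1) this
    simpa [sub_add_cancel] using this
  · exfalso
    have hLa : 0 < (a2 - a1).val := zval_pos (Ne.symm ha)
    have hb1a1 : b1 ≠ a1 := by
      intro h; rw [h, sub_self] at hlt; simp [ZMod.val_zero] at hlt
    have hneg : (a1 - b1).val = N - (b1 - a1).val := zval_neg (Ne.symm hb1a1)
    have ht1 := zval_triangle a2 a1 b1
    have ht2 := zval_triangle b2 b1 a1
    have hv1 := ZMod.val_lt (a2 - b1)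
    have hv2 := ZMod.val_lt (b2 - a1)
    have hv3 := ZMod.val_lt (b1 - a1)
    have hv4 := ZMod.val_lt (b2 - b1)
    have hv5 := ZMod.val_lt (a2 - a1)
    omega

/-- successor injectivity arithmetic core -/
lemma succ_arith {x u u' : ZMod N} (huu : u ≠ u') (hxu : x ≠ u) (hxu' : x ≠ u')
    (h1 : (x - u).val ≤ (u' - u).val) (h2 : (x - u').val ≤ (u - u').val) : False := by
  have he : 0 < (u' - u).val := zval_pos (Ne.symm huu)
  have hneg : (u - u').val = N - (u' - u).val := zval_neg huu
  have hd1 : 0 < (x - u).val := zval_pos hxu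
  have hd2 : 0 < (x - u').val := zval_pos hxu'
  have ht := zval_triangle x u' u
  have hv1 := ZMod.val_lt (u' - u)
  omega




lemma swap_sum {α β : Type*} [DecidableEq α] [DecidableEq β]
    (S : Finset α) (V : Finset β) (P : α → β → Prop) [∀ a b, Decidable (P a b)] :
    ∑ a ∈ S, (V.filter fun v => P a v).card = ∑ v ∈ V, (S.filter fun a => P a v).card := by
  simp only [Finset.card_filter]
  exact Finset.sum_comm

lemma card_val_lt (c : ZMod N) (L : ℕ) (hL : L ≤ N) :
    (Finset.univ.filter fun t : ZMod N => (t - c).val < L).card = L := by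
  rw [← Finset.card_range L]
  apply Finset.card_nbij' (fun t => (t - c).val) (fun d => (d : ZMod N) + c)
  · intro t ht; simp at ht ⊢; exact ht
  · intro d hd
    simp at hd ⊢
    exact lt_of_le_of_lt (Nat.mod_le d N) hd
  · intro t ht
    dsimp only; rw [ZMod.natCast_val, ZMod.cast_id, sub_add_cancel]
  · intro d hd
    simp at hd ⊢
    exact Nat.mod_eq_of_lt (by omega)

lemma sum_min_ge : ∀ n : ℕ, n * n ≤ 4 * (∑ d ∈ Finset.range n, min d (n - d)) + 1
  | 0 => by simp
  | 1 => by simp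
  | (n+2) => by
    have ih := sum_min_ge n
    have h1 : ∑ d ∈ Finset.range (n+2), min d (n+2-d)
        = (∑ i ∈ Finset.range (n+1), min (i+1) (n+2-(i+1))) + min 0 (n+2-0) := by
      rw [Finset.sum_range_succ']
    have h2 : (∑ i ∈ Finset.range (n+1), min (i+1) (n+2-(i+1)))
        = ∑ i ∈ Finset.range (n+1), (min i (n-i) + 1) := by
      apply Finset.sum_congr rfl
      intro i hi
      simp only [Finset.mem_range] at hi
      omega
    have h3 : ∑ i ∈ Finset.range (n+1), (min i (n-i) + 1)
        = (∑ i ∈ Finset.range (n+1), min i (n-i)) + (n+1) := by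
      rw [Finset.sum_add_distrib, Finset.sum_const, Finset.card_range, smul_eq_mul, mul_one]
    have h4 : ∑ i ∈ Finset.range (n+1), min i (n-i)
        = (∑ i ∈ Finset.range n, min i (n-i)) + min n (n-n) := Finset.sum_range_succ _ _
    rw [h1, h2, h3, h4]
    have hsq : (n+2)*(n+2) = n*n + 4*n + 4 := by ring
    simp only [Nat.sub_self]
    omega




variable {N : ℕ} [NeZero N]

lemma m_strict {V : Finset (ZMod N)} {a b : ZMod N × ZMod N}
    (ha2 : a.2 ∈ V) (heq : a.1 = b.1) (hlt : (a.2 - a.1).val < (b.2 - b.1).val) :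
    (V.filter (cov a)).card < (V.filter (cov b)).card := by
  rw [heq] at hlt
  apply Finset.card_lt_card
  rw [Finset.ssubset_iff_of_subset]
  · exact ⟨a.2, Finset.mem_filter.mpr ⟨ha2, by unfold cov; exact hlt⟩,
      fun hmem => absurd (Finset.mem_filter.mp hmem).2 (by unfold cov; exact lt_irrefl _)⟩
  · intro v hv
    rw [Finset.mem_filter] at hv ⊢
    refine ⟨hv.1, ?_⟩
    have h2 := hv.2
    unfold cov at h2 ⊢
    rw [heq] at h2
    exact lt_trans h2 hlt

lemma m_inj {V : Finset (ZMod N)} {a b : ZMod N × ZMod N}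
    (ha2 : a.2 ∈ V) (hb2 : b.2 ∈ V) (heq : a.1 = b.1)
    (hm : (V.filter (cov a)).card = (V.filter (cov b)).card) : a = b := by
  rcases lt_trichotomy ((a.2 - a.1).val) ((b.2 - b.1).val) with h | h | h
  · exact absurd hm (Nat.ne_of_lt (m_strict ha2 heq h))
  · have h2 : a.2 - a.1 = b.2 - b.1 := zval_inj h
    rw [heq] at h2
    have : a.2 = b.2 := by
      have := congrArg (· + b.1) h2
      simpa [sub_add_cancel] using this
    exact Prod.ext heq this
  · exact absurd hm.symm (Nat.ne_of_lt (m_strict hb2 heq.symm h))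

end helpers

section part
variable {N : ℕ} [NeZero N]

lemma p6_exclude (S : Finset (ZMod N × ZMod N))
    (hd : ∀ a ∈ S, a.1 ≠ a.2)
    (hsw : ∀ a ∈ S, (a.2, a.1) ∉ S)
    (hload : ∀ t, cload N S t ≤ 4)
    (hp : (verts N S).card = 6) (hE : S.card = 14) : False := by
  classical
  set V := verts N S with hVdef
  have hmem1 : ∀ a ∈ S, a.1 ∈ V := fun a ha =>
    Finset.mem_union_left _ (Finset.mem_image_of_mem _ ha)
  have hmem2 : ∀ a ∈ S, a.2 ∈ V := fun a ha =>
    Finset.mem_union_right _ (Finset.mem_image_of_mem _ ha)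
  have hcovt : ∀ a ∈ S, cov a a.1 := by
    intro a ha
    unfold cov
    rw [sub_self, ZMod.val_zero]
    exact zval_pos (hd a ha).symm
  have hm1 : ∀ a ∈ S, 1 ≤ (V.filter (cov a)).card := fun a ha =>
    Finset.card_pos.mpr ⟨a.1, Finset.mem_filter.mpr ⟨hmem1 a ha, hcovt a ha⟩⟩
  have hld : ∀ v, (S.filter fun a => cov a v).card ≤ 4 := by
    intro v
    have h := hload v
    unfold cload at h
    rwa [show (S.filter fun a => cov a v) = S.filter fun a => (v - a.1).val < (a.2 - a.1).val
      from Finset.filter_congr fun a _ => Iff.rfl]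
  have hswapsum : ∑ a ∈ S, (V.filter (cov a)).card
      = ∑ v ∈ V, (S.filter fun a => cov a v).card := swap_sum S V cov
  have hLle : ∑ a ∈ S, (V.filter (cov a)).card ≤ 24 := by
    rw [hswapsum]
    calc ∑ v ∈ V, (S.filter fun a => cov a v).card ≤ ∑ _v ∈ V, 4 :=
          Finset.sum_le_sum fun v _ => hld v
      _ = 24 := by rw [Finset.sum_const, hp]; norm_num
  have hcard_k : ∀ k, (S.filter fun a => (V.filter (cov a)).card = k).card ≤ 6 := by
    intro k
    rw [← hp]
    apply Finset.card_le_card_of_injOn (fun a => a.1)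
    · intro a ha
      rw [Finset.mem_coe, Finset.mem_filter] at ha
      exact hmem1 a ha.1
    · intro a ha b hb h
      rw [Finset.mem_coe, Finset.mem_filter] at ha hb
      exact m_inj (hmem2 a ha.1) (hmem2 b hb.1) h (ha.2.trans hb.2.symm)
  have hsum3 : 42 ≤ (∑ a ∈ S, (V.filter (cov a)).card) +
      (2 * (S.filter fun a => (V.filter (cov a)).card = 1).card
        + (S.filter fun a => (V.filter (cov a)).card = 2).card) := by
    rw [Finset.card_filter, Finset.card_filter, Finset.mul_sum,
      ← Finset.sum_add_distrib, ← Finset.sum_add_distrib]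
    have h3 : (42 : ℕ) = ∑ _a ∈ S, 3 := by rw [Finset.sum_const, hE]; norm_num
    rw [h3]
    apply Finset.sum_le_sum
    intro a ha
    have := hm1 a ha
    split_ifs <;> omega
  have hc1 : (S.filter fun a => (V.filter (cov a)).card = 1).card = 6 := by
    have := hcard_k 1; have := hcard_k 2; omega
  have hc2 : (S.filter fun a => (V.filter (cov a)).card = 2).card = 6 := by
    have := hcard_k 1; have := hcard_k 2; omega
  have hL24 : ∑ a ∈ S, (V.filter (cov a)).card = 24 := by
    have := hcard_k 1; have := hcard_k 2; omega
  have hld4 : ∀ v ∈ V, (S.filter fun a => cov a v).card = 4 := by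
    intro v hv
    by_contra hne4
    have hlt : (S.filter fun a => cov a v).card < 4 := lt_of_le_of_ne (hld v) hne4
    have hslt : ∑ u ∈ V, (S.filter fun a => cov a u).card < ∑ _u ∈ V, 4 :=
      Finset.sum_lt_sum (fun u _ => hld u) ⟨v, hv, hlt⟩
    rw [Finset.sum_const, hp, smul_eq_mul] at hslt
    omega
  -- partition of S by coverage degree
  set S1 := S.filter (fun a => (V.filter (cov a)).card = 1) with hS1def
  set S2 := S.filter (fun a => (V.filter (cov a)).card = 2) with hS2def
  set S3 := S.filter (fun a => 3 ≤ (V.filter (cov a)).card) with hS3def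
  have hcardsplit : S.card = S1.card + S2.card + S3.card := by
    rw [hS1def, hS2def, hS3def, Finset.card_filter, Finset.card_filter, Finset.card_filter,
      ← Finset.sum_add_distrib, ← Finset.sum_add_distrib]
    have h1 : S.card = ∑ _a ∈ S, 1 := by rw [Finset.sum_const, smul_eq_mul, mul_one]
    rw [h1]
    apply Finset.sum_congr rfl
    intro a ha
    have := hm1 a ha
    split_ifs <;> omega
  have hmsplit : ∑ a ∈ S, (V.filter (cov a)).card
      = S1.card + 2 * S2.card + ∑ a ∈ S3, (V.filter (cov a)).card := by
    rw [hS1def, hS2def, hS3def, Finset.card_filter, Finset.card_filter, Finset.sum_filter,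
      Finset.mul_sum, ← Finset.sum_add_distrib, ← Finset.sum_add_distrib]
    apply Finset.sum_congr rfl
    intro a ha
    have := hm1 a ha
    split_ifs <;> omega
  have hc3 : S3.card = 2 := by omega
  have hS3sum : ∑ a ∈ S3, (V.filter (cov a)).card = 6 := by omega
  have hm3 : ∀ a ∈ S3, 3 ≤ (V.filter (cov a)).card := by
    intro a ha
    exact (Finset.mem_filter.mp ha).2
  obtain ⟨a, b, hab, hS3eq⟩ := Finset.card_eq_two.mp hc3
  have haS3 : a ∈ S3 := by rw [hS3eq]; exact Finset.mem_insert_self _ _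
  have hbS3 : b ∈ S3 := by rw [hS3eq]; simp
  have haS : a ∈ S := (Finset.mem_filter.mp haS3).1
  have hbS : b ∈ S := (Finset.mem_filter.mp hbS3).1
  -- S1 arcs cover exactly their tail, tails of S1 = V
  have hfilter1 : ∀ x ∈ S1, V.filter (cov x) = {x.1} := by
    intro x hx
    obtain ⟨hxS, hm⟩ := Finset.mem_filter.mp hx
    obtain ⟨z, hz⟩ := Finset.card_eq_one.mp hm
    have hx1 : x.1 ∈ V.filter (cov x) := Finset.mem_filter.mpr ⟨hmem1 x hxS, hcovt x hxS⟩
    rw [hz, Finset.mem_singleton] at hx1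
    rw [hz, hx1]
  have hS1tails : S1.image Prod.fst = V := by
    apply Finset.eq_of_subset_of_card_le
    · intro v hv
      obtain ⟨x, hx, rfl⟩ := Finset.mem_image.mp hv
      exact hmem1 x (Finset.mem_filter.mp hx).1
    · rw [Finset.card_image_of_injOn, hc1, hp]
      intro x hx y hy h
      rw [Finset.mem_coe] at hx hy
      have hx' := Finset.mem_filter.mp hx
      have hy' := Finset.mem_filter.mp hy
      exact m_inj (hmem2 x hx'.1) (hmem2 y hy'.1) h (hx'.2.trans hy'.2.symm)
  have hs1 : ∀ v ∈ V, (S1.filter fun x => cov x v).card = 1 := by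
    intro v hv
    have hv' : v ∈ S1.image Prod.fst := by rw [hS1tails]; exact hv
    obtain ⟨x, hxS1, hxv⟩ := Finset.mem_image.mp hv'
    rw [Finset.card_eq_one]
    refine ⟨x, ?_⟩
    ext y
    simp only [Finset.mem_filter, Finset.mem_singleton]
    constructor
    · rintro ⟨hyS1, hyc⟩
      have hy1 : V.filter (cov y) = {y.1} := hfilter1 y hyS1
      have hvy : v ∈ V.filter (cov y) := Finset.mem_filter.mpr ⟨hv, hyc⟩
      rw [hy1, Finset.mem_singleton] at hvy
      have hyS1' := Finset.mem_filter.mp hyS1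
      have hxS1' := Finset.mem_filter.mp hxS1
      exact m_inj (hmem2 y hyS1'.1) (hmem2 x hxS1'.1) (by rw [← hvy, hxv])
        (hyS1'.2.trans hxS1'.2.symm)
    · intro h
      subst h
      refine ⟨hxS1, ?_⟩
      have hcc : cov y y.1 := hcovt y (Finset.mem_filter.mp hxS1).1
      rwa [hxv] at hcc
  -- second vertices of S2 arcs
  have hsecond : ∀ x ∈ S2, ∃ y, (y ∈ V ∧ y ≠ x.1 ∧ cov x y) ∧
      ∀ u ∈ V, u ≠ x.1 → (y - x.1).val ≤ (u - x.1).val := by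
    intro x hx
    obtain ⟨hxS, hm⟩ := Finset.mem_filter.mp hx
    obtain ⟨p, q, hpq, hpqeq⟩ := Finset.card_eq_two.mp hm
    have hx1mem : x.1 ∈ V.filter (cov x) :=
      Finset.mem_filter.mpr ⟨hmem1 x hxS, hcovt x hxS⟩
    have hpmem : p ∈ V.filter (cov x) := by rw [hpqeq]; simp
    have hqmem : q ∈ V.filter (cov x) := by rw [hpqeq]; simp
    rw [hpqeq, Finset.mem_insert, Finset.mem_singleton] at hx1mem
    have key : ∀ y, y ∈ V.filter (cov x) → y ≠ x.1 →
        (y ∈ V ∧ y ≠ x.1 ∧ cov x y) ∧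
        ∀ u ∈ V, u ≠ x.1 → (y - x.1).val ≤ (u - x.1).val := by
      intro y hy hyne
      have hy' := Finset.mem_filter.mp hy
      refine ⟨⟨hy'.1, hyne, hy'.2⟩, ?_⟩
      intro u hu hune
      by_contra hlt
      push_neg at hlt
      have hucov : cov x u := by
        unfold cov at hy' ⊢
        exact lt_trans hlt hy'.2
      have humem : u ∈ V.filter (cov x) := Finset.mem_filter.mpr ⟨hu, hucov⟩
      have hymem2 : y ∈ ({p, q} : Finset (ZMod N)) := by rw [← hpqeq]; exact hy
      have humem2 : u ∈ ({p, q} : Finset (ZMod N)) := by rw [← hpqeq]; exact humem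
      rw [Finset.mem_insert, Finset.mem_singleton] at hymem2 humem2
      -- u and y are both in {p,q}, both ≠ x.1, and x.1 ∈ {p,q}; so u = y
      have huy : u = y := by
        rcases hx1mem with h1 | h1 <;> rcases hymem2 with h2 | h2 <;>
          rcases humem2 with h3 | h3 <;> simp_all
      rw [huy] at hlt
      exact lt_irrefl _ hlt
    rcases hx1mem with h1 | h1
    · exact ⟨q, key q hqmem (fun hh => hpq (hh.trans h1).symm)⟩
    · exact ⟨p, key p hpmem (fun hh => hpq (hh.trans h1))⟩
  choose σ hσ using hsecond
  have hS2tails : S2.image Prod.fst = V := by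
    apply Finset.eq_of_subset_of_card_le
    · intro v hv
      obtain ⟨x, hx, rfl⟩ := Finset.mem_image.mp hv
      exact hmem1 x (Finset.mem_filter.mp hx).1
    · rw [Finset.card_image_of_injOn, hc2, hp]
      intro x hx y hy h
      rw [Finset.mem_coe] at hx hy
      have hx' := Finset.mem_filter.mp hx
      have hy' := Finset.mem_filter.mp hy
      exact m_inj (hmem2 x hx'.1) (hmem2 y hy'.1) h (hx'.2.trans hy'.2.symm)
  have hX2 : S2.attach.image (fun x => σ x.1 x.2) = V := by
    apply Finset.eq_of_subset_of_card_le
    · intro v hv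
      obtain ⟨x, _, rfl⟩ := Finset.mem_image.mp hv
      exact (hσ x.1 x.2).1.1
    · rw [Finset.card_image_of_injOn, Finset.card_attach, hc2, hp]
      intro x hx y hy hxy
      simp only [Finset.mem_coe, Finset.mem_attach] at hx hy
      by_cases ht : x.1.1 = y.1.1
      · have hx' := Finset.mem_filter.mp x.2
        have hy' := Finset.mem_filter.mp y.2
        exact Subtype.ext (m_inj (hmem2 x.1 hx'.1) (hmem2 y.1 hy'.1) ht
          (hx'.2.trans hy'.2.symm))
      · exfalso
        have hyS : y.1 ∈ S := (Finset.mem_filter.mp y.2).1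
        have hxS' : x.1 ∈ S := (Finset.mem_filter.mp x.2).1
        have h1 : (σ x.1 x.2 - x.1.1).val ≤ (y.1.1 - x.1.1).val :=
          (hσ x.1 x.2).2 y.1.1 (hmem1 y.1 hyS) (fun hh => ht hh.symm)
        have hxy' : σ x.1 x.2 = σ y.1 y.2 := hxy
        have h2 : (σ x.1 x.2 - y.1.1).val ≤ (x.1.1 - y.1.1).val := by
          rw [hxy']
          exact (hσ y.1 y.2).2 x.1.1 (hmem1 x.1 hxS') ht
        have hne2 : σ x.1 x.2 ≠ y.1.1 := by rw [hxy']; exact (hσ y.1 y.2).1.2.1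
        exact succ_arith ht (hσ x.1 x.2).1.2.1 hne2 h1 h2
  have hs2 : ∀ v ∈ V, 2 ≤ (S2.filter fun x => cov x v).card := by
    intro v hv
    have hv1 : v ∈ S2.image Prod.fst := by rw [hS2tails]; exact hv
    have hv2 : v ∈ S2.attach.image (fun x => σ x.1 x.2) := by rw [hX2]; exact hv
    obtain ⟨y, hyS2, hyv⟩ := Finset.mem_image.mp hv1
    obtain ⟨x, _, hxv⟩ := Finset.mem_image.mp hv2
    apply Finset.one_lt_card.mpr
    refine ⟨x.1, Finset.mem_filter.mpr ⟨x.2, ?_⟩, y, Finset.mem_filter.mpr ⟨hyS2, ?_⟩, ?_⟩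
    · rw [← hxv]
      exact (hσ x.1 x.2).1.2.2
    · have : cov y y.1 := hcovt y (Finset.mem_filter.mp hyS2).1
      rwa [hyv] at this
    · intro heq
      have hne' : σ x.1 x.2 ≠ x.1.1 := (hσ x.1 x.2).1.2.1
      rw [hxv, heq, hyv] at hne'
      exact hne' rfl
  have hs2sum : ∑ v ∈ V, (S2.filter fun x => cov x v).card = 12 := by
    rw [← swap_sum S2 V cov]
    calc ∑ x ∈ S2, (V.filter (cov x)).card = ∑ x ∈ S2, 2 :=
          Finset.sum_congr rfl fun x hx => (Finset.mem_filter.mp hx).2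
      _ = 12 := by rw [Finset.sum_const, hc2]; norm_num
  have hs2eq : ∀ v ∈ V, (S2.filter fun x => cov x v).card = 2 := by
    intro v hv
    by_contra hne'
    have h3 : 2 < (S2.filter fun x => cov x v).card :=
      lt_of_le_of_ne (hs2 v hv) (Ne.symm hne')
    have hslt : ∑ _u ∈ V, 2 < ∑ u ∈ V, (S2.filter fun x => cov x u).card :=
      Finset.sum_lt_sum (fun u hu => hs2 u hu) ⟨v, hv, h3⟩
    rw [Finset.sum_const, hp, smul_eq_mul] at hslt
    omega
  -- the per-vertex split
  have hsplitv : ∀ v ∈ V, (S.filter fun x => cov x v).card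
      = (S1.filter fun x => cov x v).card + (S2.filter fun x => cov x v).card
        + (S3.filter fun x => cov x v).card := by
    intro v hv
    have hun : (S.filter fun x => cov x v) = ((S1.filter fun x => cov x v)
        ∪ (S2.filter fun x => cov x v)) ∪ (S3.filter fun x => cov x v) := by
      ext x
      simp only [Finset.mem_union, Finset.mem_filter, hS1def, hS2def, hS3def]
      constructor
      · rintro ⟨hxS, hxc⟩
        have h1 := hm1 x hxS
        rcases (show (V.filter (cov x)).card = 1 ∨ (V.filter (cov x)).card = 2
            ∨ 3 ≤ (V.filter (cov x)).card by omega) with h | h | h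
        · exact Or.inl (Or.inl ⟨⟨hxS, h⟩, hxc⟩)
        · exact Or.inl (Or.inr ⟨⟨hxS, h⟩, hxc⟩)
        · exact Or.inr ⟨⟨hxS, h⟩, hxc⟩
      · rintro ((⟨⟨h, _⟩, hc⟩ | ⟨⟨h, _⟩, hc⟩) | ⟨⟨h, _⟩, hc⟩) <;> exact ⟨h, hc⟩
    have hd12 : Disjoint (S1.filter fun x => cov x v) (S2.filter fun x => cov x v) := by
      rw [Finset.disjoint_left]
      intro x hx1 hx2
      have h1 := (Finset.mem_filter.mp (Finset.mem_filter.mp hx1).1).2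
      have h2 := (Finset.mem_filter.mp (Finset.mem_filter.mp hx2).1).2
      omega
    have hd123 : Disjoint ((S1.filter fun x => cov x v) ∪ (S2.filter fun x => cov x v))
        (S3.filter fun x => cov x v) := by
      rw [Finset.disjoint_left]
      intro x hx1 hx3
      have h3 := (Finset.mem_filter.mp (Finset.mem_filter.mp hx3).1).2
      rw [Finset.mem_union] at hx1
      rcases hx1 with hx1 | hx1
      · have h1 := (Finset.mem_filter.mp (Finset.mem_filter.mp hx1).1).2
        omega
      · have h2 := (Finset.mem_filter.mp (Finset.mem_filter.mp hx1).1).2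
        omega
    rw [hun, Finset.card_union_of_disjoint hd123, Finset.card_union_of_disjoint hd12]
  have hs3 : ∀ v ∈ V, (S3.filter fun x => cov x v).card = 1 := by
    intro v hv
    have h4 := hld4 v hv
    have h1 := hs1 v hv
    have h2 := hs2eq v hv
    have hsp := hsplitv v hv
    omega
  have hs3V : ∀ v ∈ V, ∀ x ∈ S3, ∀ y ∈ S3, cov x v → cov y v → x = y := by
    intro v hv x hx y hy hcx hcy
    by_contra hxy
    have h2 : 1 < (S3.filter fun z => cov z v).card :=
      Finset.one_lt_card.mpr ⟨x, Finset.mem_filter.mpr ⟨hx, hcx⟩, y,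
        Finset.mem_filter.mpr ⟨hy, hcy⟩, hxy⟩
    have := hs3 v hv
    omega
  have hnotba1 : ¬ cov b a.1 := by
    intro hc
    exact hab (hs3V a.1 (hmem1 a haS) a haS3 b hbS3 (hcovt a haS) hc)
  have hnotab1 : ¬ cov a b.1 := by
    intro hc
    exact hab (hs3V b.1 (hmem1 b hbS) a haS3 b hbS3 hc (hcovt b hbS))
  have hcovba2 : cov b a.2 := by
    have h := hs3 a.2 (hmem2 a haS)
    have hne0 : (S3.filter fun z => cov z a.2).Nonempty := Finset.card_pos.mp (by omega)
    obtain ⟨c, hc⟩ := hne0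
    obtain ⟨hcS3, hccov⟩ := Finset.mem_filter.mp hc
    have hcab : c = a ∨ c = b := by
      rw [hS3eq] at hcS3
      simpa using hcS3
    rcases hcab with rfl | rfl
    · exact absurd hccov (by unfold cov; exact lt_irrefl _)
    · exact hccov
  have hcovab2 : cov a b.2 := by
    have h := hs3 b.2 (hmem2 b hbS)
    have hne0 : (S3.filter fun z => cov z b.2).Nonempty := Finset.card_pos.mp (by omega)
    obtain ⟨c, hc⟩ := hne0
    obtain ⟨hcS3, hccov⟩ := Finset.mem_filter.mp hc
    have hcab : c = a ∨ c = b := by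
      rw [hS3eq] at hcS3
      simpa using hcS3
    rcases hcab with rfl | rfl
    · exact hccov
    · exact absurd hccov (by unfold cov; exact lt_irrefl _)
  have h1 : b.1 = a.2 := meet (hd a haS) hcovba2 hcovab2 hnotab1
  have h2 : a.1 = b.2 := meet (hd b hbS) hcovab2 hcovba2 hnotba1
  apply hsw a haS
  have hba : (a.2, a.1) = b := Prod.ext h1.symm h2
  rw [hba]
  exact hbS

lemma part_bound (S : Finset (ZMod N × ZMod N))
    (hSne : S.Nonempty)
    (hd : ∀ a ∈ S, a.1 ≠ a.2)
    (hsw : ∀ a ∈ S, (a.2, a.1) ∉ S)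
    (hload : ∀ t, cload N S t ≤ 4) :
    6 * S.card + 9 ≤ 15 * (verts N S).card := by
  classical
  set V := verts N S with hVdef
  have hmem1 : ∀ a ∈ S, a.1 ∈ V := fun a ha =>
    Finset.mem_union_left _ (Finset.mem_image_of_mem _ ha)
  have hmem2 : ∀ a ∈ S, a.2 ∈ V := fun a ha =>
    Finset.mem_union_right _ (Finset.mem_image_of_mem _ ha)
  set m : ZMod N × ZMod N → ℕ := fun a => (V.filter (cov a)).card with hmdef
  have hcovt : ∀ a ∈ S, cov a a.1 := by
    intro a ha
    unfold cov
    rw [sub_self, ZMod.val_zero]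
    exact zval_pos (hd a ha).symm
  have hm1 : ∀ a ∈ S, 1 ≤ m a := fun a ha =>
    Finset.card_pos.mpr ⟨a.1, Finset.mem_filter.mpr ⟨hmem1 a ha, hcovt a ha⟩⟩
  have hld : ∀ v, (S.filter fun a => cov a v).card ≤ 4 := by
    intro v
    have h := hload v
    unfold cload at h
    rwa [show (S.filter fun a => cov a v) = S.filter fun a => (v - a.1).val < (a.2 - a.1).val
      from Finset.filter_congr fun a _ => Iff.rfl]
  have hLle : ∑ a ∈ S, m a ≤ 4 * V.card := by
    rw [hmdef]
    simp only
    rw [swap_sum S V cov]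
    calc ∑ v ∈ V, (S.filter fun a => cov a v).card ≤ ∑ v ∈ V, 4 :=
          Finset.sum_le_sum fun v _ => hld v
      _ = 4 * V.card := by rw [Finset.sum_const, smul_eq_mul]; ring
  have hcard_k : ∀ k, (S.filter fun a => m a = k).card ≤ V.card := by
    intro k
    apply Finset.card_le_card_of_injOn (fun a => a.1)
    · intro a ha
      rw [Finset.mem_coe, Finset.mem_filter] at ha
      exact hmem1 a ha.1
    · intro a ha b hb h
      rw [Finset.mem_coe, Finset.mem_filter] at ha hb
      exact m_inj (hmem2 a ha.1) (hmem2 b hb.1) h (ha.2.trans hb.2.symm)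
  have hsum3 : 3 * S.card ≤ (∑ a ∈ S, m a) +
      (2 * (S.filter fun a => m a = 1).card + (S.filter fun a => m a = 2).card) := by
    rw [Finset.card_filter, Finset.card_filter, Finset.mul_sum,
      ← Finset.sum_add_distrib, ← Finset.sum_add_distrib]
    have h3 : 3 * S.card = ∑ _a ∈ S, 3 := by rw [Finset.sum_const, smul_eq_mul]; ring
    rw [h3]
    apply Finset.sum_le_sum
    intro a ha
    have := hm1 a ha
    split_ifs <;> omega
  have h7 : 3 * S.card ≤ 7 * V.card := by
    have h1 := hcard_k 1
    have h2 := hcard_k 2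
    omega
  have hp2 : 2 ≤ V.card := by
    obtain ⟨a, ha⟩ := hSne
    exact Finset.one_lt_card.mpr ⟨a.1, hmem1 a ha, a.2, hmem2 a ha, hd a ha⟩
  have hpair : 2 * S.card + V.card ≤ V.card * V.card := by
    have hsub : S ∪ S.image Prod.swap ⊆ V.offDiag := by
      intro x hx
      rw [Finset.mem_union] at hx
      rw [Finset.mem_offDiag]
      rcases hx with hx | hx
      · exact ⟨hmem1 x hx, hmem2 x hx, hd x hx⟩
      · obtain ⟨y, hy, rfl⟩ := Finset.mem_image.mp hx
        exact ⟨hmem2 y hy, hmem1 y hy, (hd y hy).symm⟩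
    have hdisj : Disjoint S (S.image Prod.swap) := by
      rw [Finset.disjoint_left]
      intro x hx hx'
      obtain ⟨y, hy, hxy⟩ := Finset.mem_image.mp hx'
      apply hsw y hy
      rw [show (y.2, y.1) = x from hxy.symm ▸ rfl]
      exact hx
    have hcu := Finset.card_le_card hsub
    rw [Finset.card_union_of_disjoint hdisj,
      Finset.card_image_of_injective _ Prod.swap_injective, Finset.offDiag_card] at hcu
    have hle : V.card ≤ V.card * V.card := Nat.le_mul_of_pos_left _ (by omega)
    omega
  by_cases h9 : 9 ≤ V.card
  · omega
  · by_cases h6 : V.card = 6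
    · have h14 : S.card ≠ 14 := fun hE => p6_exclude S hd hsw hload (hVdef ▸ h6) hE
      rw [h6] at hpair h7 ⊢
      omega
    · have : V.card = 2 ∨ V.card = 3 ∨ V.card = 4 ∨ V.card = 5 ∨ V.card = 7 ∨ V.card = 8 := by
        omega
      rcases this with h | h | h | h | h | h <;> rw [h] at hpair h7 ⊢ <;> omega

end part

theorem stmt_17 (N W : ℕ) (hN : 2 ≤ N)
    -- `T` is the tournament of requests: all shortest clockwise arcs, with exactly one
    -- arc chosen per diametrical pair when `N` is even.
    (T : Finset (ZMod N × ZMod N))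
    (hT1 : ∀ a ∈ T, a.1 ≠ a.2 ∧ 2 * (a.2 - a.1).val ≤ N)
    (hT2 : ∀ i j : ZMod N, i ≠ j → 2 * (j - i).val < N → (i, j) ∈ T)
    (hT3 : ∀ i j : ZMod N, 2 * (j - i).val = N → ((i, j) ∈ T ↔ (j, i) ∉ T))
    -- a valid partition of the requests into `W` nonempty parts, each of load at most 4
    (B : Fin W → Finset (ZMod N × ZMod N))
    (hne : ∀ w, (B w).Nonempty)
    (hdisj : ∀ w w', w ≠ w' → Disjoint (B w) (B w'))
    (hcover : ∀ a : ZMod N × ZMod N, a ∈ T ↔ ∃ w, a ∈ B w)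
    (hload : ∀ w, ∀ t : ZMod N, cload N (B w) t ≤ 4) :
    ((∑ w : Fin W, (verts N (B w)).card : ℕ) : ℚ)
      ≥ (7 : ℚ) / 32 * (N : ℚ) * ((N : ℚ) - 1) + (3 : ℚ) / 160 * ((N : ℚ) - 1) := by
  haveI : NeZero N := ⟨by omega⟩
  classical
  have hkey : ∀ i j : ZMod N, i ≠ j → ((i, j) ∈ T ↔ (j, i) ∉ T) := by
    intro i j hij
    have hpos : 0 < (j - i).val := zval_pos hij.symm
    have hneg : (i - j).val = N - (j - i).val := zval_neg hij
    have hv := ZMod.val_lt (j - i)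
    rcases lt_trichotomy (2 * (j - i).val) N with h | h | h
    · have hin := hT2 i j hij h
      have hout : (j, i) ∉ T := by
        intro hji'
        have h2 := (hT1 _ hji').2
        simp only at h2
        omega
      exact iff_of_true hin hout
    · exact hT3 i j h
    · have hout : (i, j) ∉ T := by
        intro hij'
        have h2 := (hT1 _ hij').2
        simp only at h2
        omega
      have hin := hT2 j i hij.symm (by omega)
      exact iff_of_false hout (by simp [hin])
  have hswapT : ∀ a ∈ T, (a.2, a.1) ∉ T := by
    intro a ha
    exact (hkey a.1 a.2 (hT1 a ha).1).mp (by rwa [Prod.mk.eta])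
  set D := (Finset.univ : Finset (ZMod N × ZMod N)).filter (fun a => ¬ a.1 = a.2) with hDdef
  have hDT : D = T ∪ T.image Prod.swap := by
    ext a
    simp only [hDdef, Finset.mem_filter, Finset.mem_univ, true_and, Finset.mem_union,
      Finset.mem_image]
    constructor
    · intro hne'
      by_cases h : a ∈ T
      · exact Or.inl h
      · refine Or.inr ⟨(a.2, a.1), ?_, by simp⟩
        have h2 := (hkey a.1 a.2 hne')
        rw [Prod.mk.eta] at h2
        have := (not_iff_not.mpr h2).mp h
        simpa using this
    · rintro (h | ⟨y, hy, rfl⟩)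
      · exact (hT1 a h).1
      · exact ((hT1 y hy).1).symm
  have hDdisj : Disjoint T (T.image Prod.swap) := by
    rw [Finset.disjoint_left]
    intro a ha ha'
    obtain ⟨y, hy, rfl⟩ := Finset.mem_image.mp ha'
    exact hswapT y hy ha
  have hdiag : ((Finset.univ : Finset (ZMod N × ZMod N)).filter fun a => a.1 = a.2).card = N := by
    have h := Finset.card_nbij' (s := (Finset.univ : Finset (ZMod N × ZMod N)).filter
        fun a => a.1 = a.2) (t := (Finset.univ : Finset (ZMod N)))
      (fun a => a.1) (fun v => (v, v)) (fun a _ => Finset.mem_univ _)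
      (fun v _ => by simp)
      (fun a ha => by
        simp only [Finset.mem_coe, Finset.mem_filter] at ha
        exact Prod.ext rfl ha.2)
      (fun v _ => rfl)
    rw [h, Finset.card_univ, ZMod.card]
  have hDcard : D.card = N * N - N := by
    have htot : (Finset.univ : Finset (ZMod N × ZMod N)).card = N * N := by
      rw [Finset.card_univ, Fintype.card_prod, ZMod.card]
    have hsplit := Finset.card_filter_add_card_filter_not
      (s := (Finset.univ : Finset (ZMod N × ZMod N))) (p := fun a => a.1 = a.2)
    rw [htot, hdiag] at hsplit
    rw [hDdef]
    omega
  have hTcard : 2 * T.card = N * N - N := by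
    rw [hDT, Finset.card_union_of_disjoint hDdisj,
      Finset.card_image_of_injective _ Prod.swap_injective] at hDcard
    omega
  have hTbi : T = Finset.univ.biUnion B := by
    ext a
    simp [hcover a, Finset.mem_biUnion]
  have hcardsum : ∑ w : Fin W, (B w).card = T.card := by
    rw [hTbi, Finset.card_biUnion]
    intro w _ w' _ h
    exact hdisj w w' h
  -- length upper bound per part
  have hcount : ∀ a : ZMod N × ZMod N,
      ((Finset.univ : Finset (ZMod N)).filter fun v => cov a v).card = (a.2 - a.1).val := by
    intro a
    have h1 : ((Finset.univ : Finset (ZMod N)).filter fun v => cov a v)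
        = (Finset.univ.filter fun t : ZMod N => (t - a.1).val < (a.2 - a.1).val) :=
      Finset.filter_congr fun v _ => Iff.rfl
    rw [h1, card_val_lt a.1 _ (le_of_lt (ZMod.val_lt _))]
  have hlenw : ∀ w, ∑ a ∈ B w, (a.2 - a.1).val ≤ 4 * N := by
    intro w
    have hld : ∀ v, ((B w).filter fun a => cov a v).card ≤ 4 := by
      intro v
      have h := hload w v
      unfold cload at h
      rwa [show ((B w).filter fun a => cov a v)
        = (B w).filter fun a => (v - a.1).val < (a.2 - a.1).val
        from Finset.filter_congr fun a _ => Iff.rfl]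
    calc ∑ a ∈ B w, (a.2 - a.1).val
        = ∑ a ∈ B w, ((Finset.univ : Finset (ZMod N)).filter fun v => cov a v).card :=
          (Finset.sum_congr rfl fun a _ => (hcount a).symm)
      _ = ∑ v ∈ (Finset.univ : Finset (ZMod N)), ((B w).filter fun a => cov a v).card :=
          swap_sum (B w) Finset.univ cov
      _ ≤ ∑ _v ∈ (Finset.univ : Finset (ZMod N)), 4 := Finset.sum_le_sum fun v _ => hld v
      _ = 4 * N := by rw [Finset.sum_const, Finset.card_univ, ZMod.card, smul_eq_mul, mul_comm]
  have hTlen_ub : ∑ a ∈ T, (a.2 - a.1).val ≤ 4 * N * W := by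
    rw [hTbi, Finset.sum_biUnion (fun w _ w' _ h => hdisj w w' h)]
    calc ∑ w : Fin W, ∑ a ∈ B w, (a.2 - a.1).val ≤ ∑ _w : Fin W, 4 * N :=
          Finset.sum_le_sum fun w _ => hlenw w
      _ = 4 * N * W := by rw [Finset.sum_const, Finset.card_univ, Fintype.card_fin, smul_eq_mul, mul_comm]
  -- length lower bound
  have hf0 : ∀ i : ZMod N, ∑ j : ZMod N, min ((j - i).val) ((i - j).val)
      = ∑ d ∈ Finset.range N, min d (N - d) := by
    intro i
    have h1 : ∑ j : ZMod N, min ((j - i).val) ((i - j).val)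
        = ∑ x : ZMod N, min (x.val) ((-x).val) := by
      apply Fintype.sum_equiv (Equiv.subRight i)
      intro j
      simp only [Equiv.subRight_apply]
      rw [neg_sub]
    rw [h1]
    apply Finset.sum_nbij' (i := fun x : ZMod N => x.val) (j := fun d : ℕ => (d : ZMod N))
    · intro x _
      exact Finset.mem_range.mpr (ZMod.val_lt x)
    · intro d _
      exact Finset.mem_univ _
    · intro x _
      rw [ZMod.natCast_val, ZMod.cast_id]
    · intro d hd
      rw [ZMod.val_natCast, Nat.mod_eq_of_lt (Finset.mem_range.mp hd)]
    · intro x _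
      by_cases hx : x = 0
      · subst hx; simp
      · rw [ZMod.val_neg_of_ne_zero (na := ⟨hx⟩)]
  have hbig : N * (N * N) ≤ 8 * (∑ a ∈ T, (a.2 - a.1).val) + N := by
    have hsum_univ : ∑ a : ZMod N × ZMod N, min ((a.2 - a.1).val) ((a.1 - a.2).val)
        = N * ∑ d ∈ Finset.range N, min d (N - d) := by
      rw [Fintype.sum_prod_type]
      calc ∑ i : ZMod N, ∑ j : ZMod N, min ((j - i).val) ((i - j).val)
          = ∑ _i : ZMod N, ∑ d ∈ Finset.range N, min d (N - d) :=
            Finset.sum_congr rfl fun i _ => hf0 i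
        _ = N * ∑ d ∈ Finset.range N, min d (N - d) := by
            rw [Finset.sum_const, Finset.card_univ, ZMod.card, smul_eq_mul]
    have hDuniv : ∑ a ∈ D, min ((a.2 - a.1).val) ((a.1 - a.2).val)
        = ∑ a : ZMod N × ZMod N, min ((a.2 - a.1).val) ((a.1 - a.2).val) := by
      apply Finset.sum_subset (Finset.subset_univ D)
      intro a _ ha
      rw [hDdef, Finset.mem_filter] at ha
      push_neg at ha
      have heq : a.1 = a.2 := ha (Finset.mem_univ a)
      rw [heq, sub_self, ZMod.val_zero, Nat.min_comm, Nat.min_zero]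
    have hTf : ∀ a ∈ T, min ((a.2 - a.1).val) ((a.1 - a.2).val) = (a.2 - a.1).val := by
      intro a ha
      obtain ⟨hne', hle⟩ := hT1 a ha
      have h1 : (a.1 - a.2).val = N - (a.2 - a.1).val := zval_neg hne'
      have h2 := ZMod.val_lt (a.2 - a.1)
      apply min_eq_left
      omega
    have hDsum : ∑ a ∈ D, min ((a.2 - a.1).val) ((a.1 - a.2).val)
        = 2 * ∑ a ∈ T, (a.2 - a.1).val := by
      rw [hDT, Finset.sum_union hDdisj,
        Finset.sum_image (fun x _ y _ h => Prod.swap_injective h)]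
      have h1 : ∑ a ∈ T, min ((a.2 - a.1).val) ((a.1 - a.2).val)
          = ∑ a ∈ T, (a.2 - a.1).val := Finset.sum_congr rfl hTf
      have h2 : ∑ a ∈ T, min (((Prod.swap a).2 - (Prod.swap a).1).val)
          (((Prod.swap a).1 - (Prod.swap a).2).val) = ∑ a ∈ T, (a.2 - a.1).val := by
        apply Finset.sum_congr rfl
        intro a ha
        simp only [Prod.snd_swap, Prod.fst_swap]
        rw [Nat.min_comm]
        exact hTf a ha
      rw [h1, h2]
      ring
    set s := ∑ d ∈ Finset.range N, min d (N - d) with hs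
    set u := ∑ a ∈ T, (a.2 - a.1).val with hu
    have h3 : N * s = 2 * u := by rw [← hsum_univ, ← hDuniv, hDsum]
    calc N * (N * N) ≤ N * (4 * s + 1) := Nat.mul_le_mul_left N (sum_min_ge N)
      _ = 4 * (N * s) + N := by ring
      _ = 4 * (2 * u) + N := by rw [h3]
      _ = 8 * u + N := by ring
  have hW : N * N ≤ 32 * W + 1 := by
    have h1 : N * (N * N) ≤ N * (32 * W + 1) := by
      calc N * (N * N) ≤ 8 * (∑ a ∈ T, (a.2 - a.1).val) + N := hbig
        _ ≤ 8 * (4 * N * W) + N := by omega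
        _ = N * (32 * W + 1) := by ring
    exact Nat.le_of_mul_le_mul_left h1 (by omega)
  -- per-part bound
  have hpart : ∀ w, 6 * (B w).card + 9 ≤ 15 * (verts N (B w)).card := by
    intro w
    apply part_bound (B w) (hne w)
    · intro a ha
      exact (hT1 a ((hcover a).mpr ⟨w, ha⟩)).1
    · intro a ha hsw'
      exact hswapT a ((hcover a).mpr ⟨w, ha⟩) ((hcover _).mpr ⟨w, hsw'⟩)
    · exact hload w
  have hA : 6 * T.card + 9 * W ≤ 15 * (∑ w : Fin W, (verts N (B w)).card) := by
    calc 6 * T.card + 9 * W = ∑ w : Fin W, (6 * (B w).card + 9) := by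
          rw [Finset.sum_add_distrib, ← Finset.mul_sum, hcardsum, Finset.sum_const,
            Finset.card_univ, Fintype.card_fin, smul_eq_mul, mul_comm 9 W]
      _ ≤ ∑ w : Fin W, 15 * (verts N (B w)).card := Finset.sum_le_sum fun w _ => hpart w
      _ = 15 * ∑ w : Fin W, (verts N (B w)).card := by rw [Finset.mul_sum]
  -- final arithmetic
  rw [ge_iff_le]
  have hNN : N ≤ N * N := Nat.le_mul_of_pos_left N (by omega)
  set An : ℕ := ∑ w : Fin W, (verts N (B w)).card with hAn
  qify [hNN] at hTcard
  qify at hW hA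
  linarith [hTcard, hW, hA]
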